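/- The K-algebra homomorphism π : A → K[t,t⁻¹] determined by π(Y) = t and π(X) = t⁻¹ is surjective and its kernel equals J; consequently A/J is isomorphic as a K-algebra to the Laurent polynomial ring K[t,t⁻¹]. -/

import Mathlib

noncomputable section

/-- The relation `X * Y = 1` defining the Jacobson algebra. -/
def JacRel (K : Type) [Field K] : FreeAlgebra K (Fin 2) → FreeAlgebra K (Fin 2) → Prop :=
  fun a b => a = FreeAlgebra.ι K (0 : Fin 2) * FreeAlgebra.ι K (1 : Fin 2) ∧ b = 1

/-- The Jacobson algebra `K⟨X, Y ∣ XY = 1⟩`. -/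
abbrev Jac (K : Type) [Field K] := RingQuot (JacRel K)

variable (K : Type) [Field K]

/-- The generator `X`. -/
def Xg : Jac K := RingQuot.mkAlgHom K (JacRel K) (FreeAlgebra.ι K 0)
/-- The generator `Y`. -/
def Yg : Jac K := RingQuot.mkAlgHom K (JacRel K) (FreeAlgebra.ι K 1)

/-- `w = 1 - YX`. -/
def wE : Jac K := 1 - Yg K * Xg K

/-- The two-sided ideal of the Jacobson algebra generated by `w = 1 - YX`. -/
def JacJ : TwoSidedIdeal (Jac K) := TwoSidedIdeal.span {wE K}

/-- The `K`-algebra homomorphism `π : A → K[t,t⁻¹]` with `π X = t⁻¹` and `π Y = t`. -/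
def piJ : Jac K →ₐ[K] LaurentPolynomial K :=
  RingQuot.liftAlgHom K
    ⟨FreeAlgebra.lift K
        (fun i : Fin 2 => if i = 0 then LaurentPolynomial.T (-1) else LaurentPolynomial.T 1),
      by
        rintro a b ⟨ha, hb⟩
        subst ha; subst hb
        rw [map_mul, map_one, FreeAlgebra.lift_ι_apply, FreeAlgebra.lift_ι_apply,
          if_pos rfl, if_neg (by decide), ← LaurentPolynomial.T_add]
        norm_num⟩

lemma piY : piJ K (Yg K) = LaurentPolynomial.T 1 := by
  rw [piJ, Yg, RingQuot.liftAlgHom_mkAlgHom_apply, FreeAlgebra.lift_ι_apply,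
    if_neg (by decide)]

lemma piX : piJ K (Xg K) = LaurentPolynomial.T (-1) := by
  rw [piJ, Xg, RingQuot.liftAlgHom_mkAlgHom_apply, FreeAlgebra.lift_ι_apply, if_pos rfl]

lemma piw : piJ K (wE K) = 0 := by
  rw [wE, map_sub, map_one, map_mul, piY, piX, ← LaurentPolynomial.T_add]
  norm_num

lemma Jle : ∀ a : Jac K, a ∈ JacJ K → piJ K a = 0 := by
  intro a ha
  rw [JacJ, TwoSidedIdeal.mem_span_iff] at ha
  have := ha (TwoSidedIdeal.ker (piJ K)) (by
    rintro x rfl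
    rw [SetLike.mem_coe, TwoSidedIdeal.mem_ker]
    exact piw K)
  rwa [TwoSidedIdeal.mem_ker] at this

lemma keyRel : ∀ a b : Jac K, (JacJ K).ringCon a b → piJ K a = piJ K b := by
  intro a b h
  rw [TwoSidedIdeal.rel_iff] at h
  have := Jle K _ h
  rw [map_sub, sub_eq_zero] at this
  exact this

/-- `π` descends to the quotient. -/
def piBar : (JacJ K).ringCon.Quotient →+* LaurentPolynomial K where
  toFun := Quotient.lift (piJ K) (keyRel K)
  map_one' := map_one (piJ K)
  map_mul' := fun x y => Quotient.inductionOn₂ x y fun a b => map_mul (piJ K) a b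
  map_zero' := map_zero (piJ K)
  map_add' := fun x y => Quotient.inductionOn₂ x y fun a b => map_add (piJ K) a b

@[simp] lemma piBar_mk' (a : Jac K) : piBar K ((JacJ K).ringCon.mk' a) = piJ K a := rfl

lemma XYone : Xg K * Yg K = 1 := by
  rw [Xg, Yg, ← map_mul, ← map_one (RingQuot.mkAlgHom K (JacRel K))]
  exact RingQuot.mkAlgHom_rel K ⟨rfl, rfl⟩

lemma YXone : (JacJ K).ringCon.mk' (Yg K * Xg K) = 1 := by
  have hw : wE K ∈ JacJ K := TwoSidedIdeal.subset_span rfl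
  have : (JacJ K).ringCon (Yg K * Xg K) 1 := by
    rw [TwoSidedIdeal.rel_iff]
    simpa [wE] using (JacJ K).neg_mem hw
  exact Quotient.sound' this

/-- The class of `Y` as a unit of the quotient. -/
def uY : ((JacJ K).ringCon.Quotient)ˣ where
  val := (JacJ K).ringCon.mk' (Yg K)
  inv := (JacJ K).ringCon.mk' (Xg K)
  val_inv := by rw [← map_mul]; exact YXone K
  inv_val := by rw [← map_mul, XYone, map_one]

noncomputable instance algQ : Algebra K ((JacJ K).ringCon.Quotient) :=
  RingHom.toAlgebra' (((JacJ K).ringCon.mk').comp (algebraMap K (Jac K))) (by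
    intro c x
    induction x using Quotient.inductionOn' with
    | h a =>
      show _ * (JacJ K).ringCon.mk' a = (JacJ K).ringCon.mk' a * _
      simp only [RingHom.comp_apply, ← map_mul]
      rw [Algebra.commutes])

lemma algebraMap_Q (c : K) :
    algebraMap K ((JacJ K).ringCon.Quotient) c
      = (JacJ K).ringCon.mk' (algebraMap K (Jac K) c) := rfl

/-- The inverse map `K[t,t⁻¹] → A/J`. -/
noncomputable def psiJ : LaurentPolynomial K →ₐ[K] (JacJ K).ringCon.Quotient :=
  AddMonoidAlgebra.lift K _ ℤ
    ((Units.coeHom _).comp (zpowersHom ((JacJ K).ringCon.Quotient)ˣ (uY K)))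

lemma psi_T (n : ℤ) : psiJ K (LaurentPolynomial.T n) = ((uY K) ^ n : _ˣ) := by
  rw [LaurentPolynomial.T, psiJ, AddMonoidAlgebra.lift_single, Algebra.smul_def, map_one, one_mul]
  rfl

lemma piBar_psi_T (n : ℤ) : piBar K (psiJ K (LaurentPolynomial.T n))
    = LaurentPolynomial.T n := by
  rw [psi_T]
  induction n using Int.induction_on with
  | zero => simp [LaurentPolynomial.T_zero]
  | succ k ih =>
    rw [zpow_add_one, Units.val_mul, map_mul, ih]
    show _ * piBar K ((JacJ K).ringCon.mk' (Yg K)) = _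
    rw [piBar_mk', piY, ← LaurentPolynomial.T_add]
  | pred k ih =>
    rw [zpow_sub_one, Units.val_mul, map_mul, ih]
    show _ * piBar K ((JacJ K).ringCon.mk' (Xg K)) = _
    rw [piBar_mk', piX, ← LaurentPolynomial.T_add, sub_eq_add_neg]

lemma right_inv : ∀ p : LaurentPolynomial K, piBar K (psiJ K p) = p := by
  have : (piBar K).comp (psiJ K : LaurentPolynomial K →+* _) = RingHom.id _ := by
    apply AddMonoidAlgebra.ringHom_ext
    · intro b
      have hb : (AddMonoidAlgebra.single (0 : ℤ) b : LaurentPolynomial K)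
          = algebraMap K (LaurentPolynomial K) b := by
        rw [AddMonoidAlgebra.coe_algebraMap]
        simp
      simp only [RingHom.comp_apply, RingHom.id_apply, hb]
      rw [RingHom.coe_coe, AlgHom.commutes, algebraMap_Q]
      show piJ K _ = _
      rw [AlgHom.commutes]
    · intro n
      simpa using piBar_psi_T K n
  exact fun p => RingHom.congr_fun this p

lemma mkAlgHom_comm (c : K) :
    (JacJ K).ringCon.mk' (algebraMap K (Jac K) c)
      = algebraMap K ((JacJ K).ringCon.Quotient) c := rfl

/-- `mk'` as an algebra hom. -/
noncomputable def mkA : Jac K →ₐ[K] (JacJ K).ringCon.Quotient :=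
  { (JacJ K).ringCon.mk' with commutes' := fun c => (mkAlgHom_comm K c).symm }

lemma left_inv : ∀ a : Jac K, psiJ K (piJ K a) = (JacJ K).ringCon.mk' a := by
  have h : (psiJ K).comp (piJ K) = mkA K := by
    apply RingQuot.ringQuot_ext'
    apply FreeAlgebra.hom_ext
    funext i
    fin_cases i
    · show psiJ K (piJ K (Xg K)) = mkA K (Xg K)
      rw [piX, psi_T]
      show (((uY K) ^ (-1 : ℤ) : _ˣ) : _) = (JacJ K).ringCon.mk' (Xg K)
      rw [zpow_neg_one]
      rfl
    · show psiJ K (piJ K (Yg K)) = mkA K (Yg K)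
      rw [piY, psi_T, zpow_one]
      rfl
  intro a
  exact AlgHom.congr_fun h a

/-- The induced ring equivalence `A/J ≃+* K[t,t⁻¹]`. -/
noncomputable def eJ : (JacJ K).ringCon.Quotient ≃+* LaurentPolynomial K :=
  { piBar K with
    invFun := psiJ K
    left_inv := fun q => Quotient.inductionOn' q fun a => by
      show psiJ K (piJ K a) = _
      rw [left_inv K a]
      rfl
    right_inv := right_inv K }

/-- The homomorphism `π : A → K[t,t⁻¹]` given by `π Y = t`, `π X = t⁻¹` is surjective with
kernel `J`; consequently `A/J ≅ K[t,t⁻¹]` as `K`-algebras. -/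
theorem stmt3 :
    piJ K (Yg K) = LaurentPolynomial.T 1 ∧
    piJ K (Xg K) = LaurentPolynomial.T (-1) ∧
    Function.Surjective (piJ K) ∧
    (∀ a : Jac K, piJ K a = 0 ↔ a ∈ JacJ K) ∧
    ∃ e : (JacJ K).ringCon.Quotient ≃+* LaurentPolynomial K,
      ∀ a : Jac K, e ((JacJ K).ringCon.mk' a) = piJ K a := by
  refine ⟨piY K, piX K, ?_, ?_, eJ K, fun a => rfl⟩
  · intro p
    obtain ⟨a, ha⟩ := Quotient.exists_rep (psiJ K p)
    refine ⟨a, ?_⟩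
    have : (JacJ K).ringCon.mk' a = psiJ K p := ha
    have := congrArg (piBar K) this
    rwa [piBar_mk', right_inv K p] at this
  · intro a
    constructor
    · intro h
      have := left_inv K a
      rw [h, map_zero] at this
      have hmk : (JacJ K).ringCon.mk' a = (JacJ K).ringCon.mk' 0 := by
        rw [map_zero]; exact this.symm
      have h0 : (JacJ K).ringCon a 0 := Quotient.exact' hmk
      rw [TwoSidedIdeal.rel_iff] at h0
      simpa using h0
    · exact Jle K a
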